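/- For d' ≥ 1, let bin(t) ∈ {0,1}^{d'} be the binary representation of t ∈ {1,...,2^{d'}-1}, and set u_t = bin(t)/‖bin(t)‖. Then ⟨u_t, u_t⟩ = 1 and for t ≠ s, ⟨u_t, u_s⟩ ≤ sqrt(1 - 1/d') < 1, with the maximum overlap sqrt((d'-1)/d') attained by the pair t = 2^{d'}-1, s = 2^{d'}-2. -/

import Mathlib

open RealInnerProductSpace

/-- The 0/1 binary-representation vector of `t` in `ℝ^{d'}`. -/
noncomputable def binVec (d' t : ℕ) : EuclideanSpace ℝ (Fin d') :=
  WithLp.toLp 2 fun i => if Nat.testBit t (i : ℕ) then 1 else 0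

/-- The normalized binary embedding of `t`. -/
noncomputable def binEmb (d' t : ℕ) : EuclideanSpace ℝ (Fin d') :=
  ‖binVec d' t‖⁻¹ • binVec d' t

/-- The set of bits of `t` among `0,...,d'-1`. -/
def bitset (d' t : ℕ) : Finset (Fin d') := Finset.univ.filter (fun i => t.testBit i.val)

theorem inner_binVec (d' t s : ℕ) :
    ⟪binVec d' t, binVec d' s⟫ = ((bitset d' t ∩ bitset d' s).card : ℝ) := by
  rw [PiLp.inner_apply]
  rw [show bitset d' t ∩ bitset d' s
      = Finset.univ.filter (fun i : Fin d' => t.testBit i.val ∧ s.testBit i.val) by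
    simp [bitset, Finset.filter_and, Finset.filter_inter_distrib]]
  rw [Finset.card_filter]
  push_cast
  apply Finset.sum_congr rfl
  intro i _
  by_cases h1 : Nat.testBit t i.val <;> by_cases h2 : Nat.testBit s i.val <;>
    simp [binVec, h1, h2]

theorem norm_binVec (d' t : ℕ) : ‖binVec d' t‖ = Real.sqrt (bitset d' t).card := by
  rw [norm_eq_sqrt_real_inner, inner_binVec, Finset.inter_self]

theorem inner_binEmb (d' t s : ℕ) : ⟪binEmb d' t, binEmb d' s⟫
    = ((bitset d' t).card : ℝ).sqrt⁻¹ * ((bitset d' s).card : ℝ).sqrt⁻¹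
      * ((bitset d' t ∩ bitset d' s).card : ℝ) := by
  rw [binEmb, binEmb, real_inner_smul_left, real_inner_smul_right, inner_binVec,
    norm_binVec, norm_binVec]
  ring

theorem bitset_nonempty (d' t : ℕ) (h1 : 1 ≤ t) (h2 : t ≤ 2 ^ d' - 1) :
    (bitset d' t).Nonempty := by
  obtain ⟨i, hi, hmax⟩ := Nat.exists_most_significant_bit (n := t) (by omega)
  have hlt : t < 2 ^ d' := by have := Nat.one_le_two_pow (n := d'); omega
  have hid : i < d' := by
    by_contra h
    have : t < 2 ^ i := lt_of_lt_of_le hlt (Nat.pow_le_pow_right (by norm_num) (by omega))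
    rw [Nat.testBit_lt_two_pow this] at hi; exact Bool.false_ne_true hi
  exact ⟨⟨i, hid⟩, by simp [bitset, hi]⟩

theorem bitset_inj (d' t s : ℕ) (ht : t ≤ 2 ^ d' - 1) (hs : s ≤ 2 ^ d' - 1)
    (h : bitset d' t = bitset d' s) : t = s := by
  have h1 : (1:ℕ) ≤ 2 ^ d' := Nat.one_le_two_pow
  apply Nat.eq_of_testBit_eq
  intro i
  by_cases hid : i < d'
  · have := Finset.ext_iff.mp h ⟨i, hid⟩
    simp [bitset] at this
    by_cases h1 : t.testBit i <;> by_cases h2 : s.testBit i <;> simp_all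
  · rw [Nat.testBit_lt_two_pow, Nat.testBit_lt_two_pow] <;>
      calc _ ≤ 2 ^ d' - 1 := by assumption
        _ < 2 ^ d' := by omega
        _ ≤ 2 ^ i := Nat.pow_le_pow_right (by norm_num) (by omega)

theorem testBit_pow_sub_two (d' i : ℕ) (hd : 1 ≤ d') :
    (2 ^ d' - 2).testBit i = decide (1 ≤ i ∧ i < d') := by
  have h : 2 ^ d' - 2 = 2 * (2 ^ (d'-1) - 1) := by
    have : 2 ^ d' = 2 * 2 ^ (d'-1) := by
      rw [← pow_succ']; congr 1; omega
    omega
  rw [h]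
  cases i with
  | zero => simp [Nat.testBit_zero]
  | succ i =>
      rw [Nat.testBit_succ, Nat.mul_div_cancel_left _ (by norm_num),
        Nat.testBit_two_pow_sub_one]
      simp; omega

theorem bitset_top (d' : ℕ) : bitset d' (2 ^ d' - 1) = Finset.univ := by
  ext i; simp [bitset, Nat.testBit_two_pow_sub_one, i.isLt]

theorem card_penult (d' : ℕ) (hd : 1 ≤ d') :
    (bitset d' (2 ^ d' - 2)).card = d' - 1 := by
  have hp : bitset d' (2 ^ d' - 2) = Finset.univ.filter (fun i : Fin d' => 1 ≤ i.val) := by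
    ext i; simp [bitset, testBit_pow_sub_two d' i.val hd, i.isLt]
  rw [hp]
  rw [show (Finset.univ.filter (fun i : Fin d' => 1 ≤ i.val))
      = Finset.univ \ {(⟨0, by omega⟩ : Fin d')} by
    ext i; simp [Fin.ext_iff]; omega]
  rw [Finset.card_sdiff_of_subset (by simp)]
  simp

theorem key_ineq (d' a b c : ℕ) (hd : 2 ≤ d') (ha : a ≤ d') (hb : b ≤ d')
    (hca : c ≤ a) (hcb : c ≤ b) (h : c < a ∨ c < b) :
    (c:ℝ)^2 * d' ≤ ((d':ℝ) - 1) * (a * b) := by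
  have hd' : (2:ℝ) ≤ d' := by exact_mod_cast hd
  rcases h with h | h
  · have h1 : (c:ℝ) + 1 ≤ a := by exact_mod_cast h
    have h2 : (c:ℝ) ≤ b := by exact_mod_cast hcb
    have h3 : (a:ℝ) ≤ d' := by exact_mod_cast ha
    have h4 : (b:ℝ) ≤ d' := by exact_mod_cast hb
    have hc0 : (0:ℝ) ≤ c := by positivity
    have hb0 : (0:ℝ) ≤ b := by positivity
    nlinarith [mul_le_mul h1 h2 hc0 (by linarith), mul_le_mul_of_nonneg_left h3 hb0]
  · have h1 : (c:ℝ) + 1 ≤ b := by exact_mod_cast h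
    have h2 : (c:ℝ) ≤ a := by exact_mod_cast hca
    have h3 : (a:ℝ) ≤ d' := by exact_mod_cast ha
    have h4 : (b:ℝ) ≤ d' := by exact_mod_cast hb
    have hc0 : (0:ℝ) ≤ c := by positivity
    have ha0 : (0:ℝ) ≤ a := by positivity
    nlinarith [mul_le_mul h1 h2 hc0 (by linarith), mul_le_mul_of_nonneg_left h4 ha0]

/-- Normalized binary embeddings: unit norm, pairwise overlap at most
`√(1 - 1/d') < 1`, with the maximal overlap `√((d'-1)/d')` attained by the
pair `t = 2^{d'}-1`, `s = 2^{d'}-2`. -/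
theorem binary_embedding_overlaps (d' : ℕ) (hd : 2 ≤ d') :
    (∀ t : ℕ, 1 ≤ t → t ≤ 2 ^ d' - 1 → ⟪binEmb d' t, binEmb d' t⟫ = 1) ∧
    (∀ t s : ℕ, 1 ≤ t → t ≤ 2 ^ d' - 1 → 1 ≤ s → s ≤ 2 ^ d' - 1 → t ≠ s →
      ⟪binEmb d' t, binEmb d' s⟫ ≤ Real.sqrt (1 - 1 / (d' : ℝ))) ∧
    Real.sqrt (1 - 1 / (d' : ℝ)) < 1 ∧
    ⟪binEmb d' (2 ^ d' - 1), binEmb d' (2 ^ d' - 2)⟫ =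
      Real.sqrt (((d' : ℝ) - 1) / (d' : ℝ)) := by
  have hd0 : (0:ℝ) < d' := by positivity
  have hd2 : (2:ℝ) ≤ d' := by exact_mod_cast hd
  refine ⟨?_, ?_, ?_, ?_⟩
  · -- unit norm
    intro t h1 h2
    have ha : 0 < (bitset d' t).card := Finset.card_pos.mpr (bitset_nonempty d' t h1 h2)
    have ha' : (0:ℝ) < (bitset d' t).card := by exact_mod_cast ha
    have hs : (0:ℝ) < Real.sqrt (bitset d' t).card := Real.sqrt_pos.mpr ha'
    rw [inner_binEmb, Finset.inter_self]
    have hms := Real.mul_self_sqrt ha'.le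
    field_simp
    rw [Real.sq_sqrt ha'.le]
  · -- overlap bound
    intro t s ht1 ht2 hs1 hs2 hts
    set A := bitset d' t with hA
    set B := bitset d' s with hB
    have haA : 0 < A.card := Finset.card_pos.mpr (bitset_nonempty d' t ht1 ht2)
    have haB : 0 < B.card := Finset.card_pos.mpr (bitset_nonempty d' s hs1 hs2)
    have hca : (A ∩ B).card ≤ A.card := Finset.card_le_card Finset.inter_subset_left
    have hcb : (A ∩ B).card ≤ B.card := Finset.card_le_card Finset.inter_subset_right
    have hAd : A.card ≤ d' := by
      simpa using Finset.card_le_card (Finset.subset_univ A)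
    have hBd : B.card ≤ d' := by
      simpa using Finset.card_le_card (Finset.subset_univ B)
    have hlt : (A ∩ B).card < A.card ∨ (A ∩ B).card < B.card := by
      by_contra h
      push_neg at h
      have h1 : A ⊆ B := by
        have : A ∩ B = A := Finset.eq_of_subset_of_card_le Finset.inter_subset_left h.1
        exact this ▸ Finset.inter_subset_right
      have h2 : B ⊆ A := by
        have : A ∩ B = B := Finset.eq_of_subset_of_card_le Finset.inter_subset_right h.2
        exact this ▸ Finset.inter_subset_left
      exact hts (bitset_inj d' t s ht2 hs2 (Finset.Subset.antisymm h1 h2))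
    have haA' : (0:ℝ) < A.card := by exact_mod_cast haA
    have haB' : (0:ℝ) < B.card := by exact_mod_cast haB
    rw [inner_binEmb]
    have heq : ((A.card : ℝ)).sqrt⁻¹ * ((B.card : ℝ)).sqrt⁻¹ * ((A ∩ B).card : ℝ)
        = Real.sqrt (((A ∩ B).card : ℝ)^2 / (A.card * B.card)) := by
      rw [Real.sqrt_div (by positivity), Real.sqrt_sq (by positivity),
        Real.sqrt_mul (by positivity), div_eq_mul_inv, mul_inv]
      ring
    rw [heq]
    apply Real.sqrt_le_sqrt
    rw [div_le_iff₀ (by positivity)]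
    have h1d : (1:ℝ) - 1 / d' = ((d':ℝ) - 1) / d' := by field_simp
    rw [h1d, div_mul_eq_mul_div, le_div_iff₀ hd0]
    calc ((A ∩ B).card : ℝ)^2 * d'
        ≤ ((d':ℝ) - 1) * (A.card * B.card) :=
          key_ineq d' A.card B.card (A ∩ B).card hd hAd hBd hca hcb hlt
      _ = ((d':ℝ) - 1) * A.card * B.card := by ring
      _ = _ := by ring
  · -- strictly less than 1
    have h1 : (1:ℝ) - 1 / d' < 1 := by
      have : (0:ℝ) < 1 / d' := by positivity
      linarith
    have h0 : (0:ℝ) ≤ 1 - 1 / d' := by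
      have : (1:ℝ) / d' ≤ 1 := by
        rw [div_le_one hd0]; linarith
      linarith
    calc Real.sqrt (1 - 1 / d') < Real.sqrt 1 := Real.sqrt_lt_sqrt h0 h1
      _ = 1 := Real.sqrt_one
  · -- maximal pair
    rw [inner_binEmb, bitset_top, Finset.univ_inter, card_penult d' (by omega),
      Finset.card_univ, Fintype.card_fin]
    have hd1 : 1 ≤ d' := by omega
    have hcast : ((d' - 1 : ℕ) : ℝ) = (d' : ℝ) - 1 := by
      push_cast [hd1]; ring
    rw [hcast]
    have hx : (0:ℝ) ≤ (d':ℝ) - 1 := by linarith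
    have hsx : (0:ℝ) < Real.sqrt ((d':ℝ) - 1) ∨ (d':ℝ) - 1 = 0 := by
      left; exact Real.sqrt_pos.mpr (by linarith)
    have hsd : (0:ℝ) < Real.sqrt d' := Real.sqrt_pos.mpr hd0
    rw [Real.sqrt_div hx]
    rcases hsx with hsx | hsx
    · field_simp
      nlinarith [Real.mul_self_sqrt hx, Real.mul_self_sqrt hd0.le]
    · linarith
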